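/- Let G* be an MPDAG with B-components G*₁,…,G*ₖ over vertex sets V₁,…,Vₖ. Then for any choice of DAGs G₁∈[G*₁],…,Gₖ∈[G*ₖ], there exists a DAG G∈[G*] whose induced subgraph over Vᵢ equals Gᵢ for every i. -/

import Mathlib

/-! ## Basic notions for directed graphs (DAGs) given by an edge relation `E`. -/

/-- A directed graph (edge relation `E`) is acyclic: no directed cycles. -/
def Acyclic {V : Type*} (E : V → V → Prop) : Prop := ∀ x, ¬ Relation.TransGen E x x

/-- Two nodes are adjacent if there is an edge between them in either direction. -/
def adjD {V : Type*} (E : V → V → Prop) (a b : V) : Prop := E a b ∨ E b a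

/-- `p` is a path (in the skeleton) from `X` to `Y`: consecutive nodes are adjacent and
nodes are pairwise distinct. -/
def IsPath {V : Type*} (E : V → V → Prop) (p : List V) (X Y : V) : Prop :=
  p.head? = some X ∧ p.getLast? = some Y ∧ p.Chain' (adjD E) ∧ p.Nodup

/-- A path is d-connecting (open) given `S` if every collider on it is an ancestor
of some node of `S` and no non-collider on it lies in `S`. -/
def dConnecting {V : Type*} (E : V → V → Prop) (S : Set V) (p : List V) : Prop :=
  ∀ (i : ℕ) a b c, p[i]? = some a → p[i+1]? = some b → p[i+2]? = some c →
    ((E a b ∧ E c b) → ∃ s ∈ S, Relation.ReflTransGen E b s) ∧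
    (¬ (E a b ∧ E c b) → b ∉ S)

/-- `X` and `Y` are d-separated by `S` if every path between them is blocked by `S`. -/
def dSeparated {V : Type*} (E : V → V → Prop) (S : Set V) (X Y : V) : Prop :=
  ∀ p : List V, IsPath E p X Y → ¬ dConnecting E S p

/-- A v-structure `a → b ← c` with `a`, `c` non-adjacent. -/
def vStructD {V : Type*} (E : V → V → Prop) (a b c : V) : Prop :=
  E a b ∧ E c b ∧ a ≠ c ∧ ¬ adjD E a c

/-! ## Partially directed graphs (PDAGs / MPDAGs). -/

/-- A partially directed graph: directed edges `dir` and undirected edges `undir`. -/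
structure PDAG (V : Type*) where
  dir : V → V → Prop
  undir : V → V → Prop
  undir_symm : ∀ a b, undir a b → undir b a
  dir_asymm : ∀ a b, dir a b → ¬ dir b a
  disj : ∀ a b, undir a b → ¬ dir a b

namespace PDAG

variable {V : Type*} (G : PDAG V)

/-- Adjacency in a partially directed graph. -/
def adj (a b : V) : Prop := G.dir a b ∨ G.dir b a ∨ G.undir a b

/-- A v-structure `a → b ← c` in a PDAG, with `a, c` non-adjacent. -/
def vStruct (a b c : V) : Prop := G.dir a b ∧ G.dir c b ∧ a ≠ c ∧ ¬ G.adj a c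

/-- Parents of `X`. -/
def pa (X : V) : Set V := {z | G.dir z X}

/-- Children of `X`. -/
def ch (X : V) : Set V := {z | G.dir X z}

/-- Siblings (undirected neighbours) of `X`. -/
def sib (X : V) : Set V := {z | G.undir X z}

/-- A DAG `E` is represented by the (M)PDAG `G` (i.e. `E ∈ [G]`): it is acyclic,
has the same skeleton and the same v-structures as `G`, and preserves every
directed edge of `G`. -/
def Represents (E : V → V → Prop) : Prop :=
  Acyclic E ∧ (∀ a b, adjD E a b ↔ G.adj a b) ∧
  (∀ a b, G.dir a b → E a b) ∧
  (∀ a b c, vStructD E a b c ↔ G.vStruct a b c)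

/-- `G` is an MPDAG: its represented class is non-empty, an edge is directed in
`G` iff it has that orientation in all DAGs of the class, and every undirected
edge takes both orientations across the class. -/
def IsMPDAG : Prop :=
  (∃ E, G.Represents E) ∧
  (∀ a b, G.dir a b ↔ (G.adj a b ∧ ∀ E, G.Represents E → E a b)) ∧
  (∀ a b, G.undir a b → ∃ E, G.Represents E ∧ E a b)

/-- Induced sub-PDAG on a vertex set `W`. -/
def induce (W : Set V) : PDAG V where
  dir a b := a ∈ W ∧ b ∈ W ∧ G.dir a b
  undir a b := a ∈ W ∧ b ∈ W ∧ G.undir a b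
  undir_symm a b h := ⟨h.2.1, h.1, G.undir_symm a b h.2.2⟩
  dir_asymm a b h hb := G.dir_asymm a b h.2.2 hb.2.2
  disj a b h hd := G.disj a b h.2.2 hd.2.2

end PDAG

/-- A path in a PDAG: consecutive nodes adjacent, pairwise distinct nodes. -/
def IsPDAGPath {V : Type*} (G : PDAG V) (p : List V) (X Y : V) : Prop :=
  p.head? = some X ∧ p.getLast? = some Y ∧ p.Chain' G.adj ∧ p.Nodup

/-- A path is b-possibly causal: no edge `V_j → V_i` in `G` for `i < j` along it. -/
def bPossiblyCausal {V : Type*} (G : PDAG V) (p : List V) : Prop :=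
  ∀ (i j : ℕ) a b, i < j → p[i]? = some a → p[j]? = some b → ¬ G.dir b a

/-- A path is chordless: non-consecutive nodes are non-adjacent. -/
def Chordless {V : Type*} (G : PDAG V) (p : List V) : Prop :=
  ∀ (i j : ℕ) a b, i + 1 < j → p[i]? = some a → p[j]? = some b → ¬ G.adj a b

/-- Critical set of `X` with respect to `Y` in `G`: the adjacent vertices of `X`
lying on some chordless b-possibly causal path from `X` to `Y`. -/
def criticalSet {V : Type*} (G : PDAG V) (X Y : V) : Set V :=
  {c | ∃ p : List V, IsPDAGPath G p X Y ∧ bPossiblyCausal G p ∧ Chordless G p ∧ p[1]? = some c}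

/-- A DAG extension of `G`: acyclic, same skeleton, all directed edges of `G`
kept, and no v-structures beyond those of `G`. -/
def ExtendsNoNewV {V : Type*} (G : PDAG V) (E : V → V → Prop) : Prop :=
  Acyclic E ∧ (∀ a b, adjD E a b ↔ G.adj a b) ∧
  (∀ a b, G.dir a b → E a b) ∧
  (∀ a b c, vStructD E a b c → G.vStruct a b c)

/-- An acyclic orientation of `G` extending its directed edges. -/
def ExtendsDir {V : Type*} (G : PDAG V) (E : V → V → Prop) : Prop :=
  Acyclic E ∧ (∀ a b, adjD E a b ↔ G.adj a b) ∧ (∀ a b, G.dir a b → E a b)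

/-- `W` is (the vertex set of) a B-component of `G`: an equivalence class of the
undirected-connectivity relation. -/
def IsBComponent {V : Type*} (G : PDAG V) (W : Set V) : Prop :=
  ∃ a, W = {b | Relation.ReflTransGen G.undir a b}

/-- Every non-endpoint node of `p` is of definite status in `M`: a definite
collider or a definite non-collider. -/
def DefiniteStatus {V : Type*} (M : PDAG V) (p : List V) : Prop :=
  ∀ (i : ℕ) a b c, p[i]? = some a → p[i+1]? = some b → p[i+2]? = some c →
    (M.dir a b ∧ M.dir c b) ∨ M.dir b a ∨ M.dir b c ∨
    (M.undir a b ∧ M.undir b c ∧ ¬ M.adj a c)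

section MeekAux

variable {V : Type*} {G : PDAG V}

lemma rep_all_dir (hG : G.IsMPDAG) {a b : V} (hadj : G.adj a b)
    (h : ∀ E, G.Represents E → E a b) : G.dir a b :=
  (hG.2.1 a b).2 ⟨hadj, h⟩

lemma meek_R2 (hG : G.IsMPDAG) {a b c : V} (h1 : G.dir a b) (h2 : G.dir b c)
    (h3 : G.adj a c) : G.dir a c := by
  apply rep_all_dir hG h3
  intro E hE
  have hab := hE.2.2.1 a b h1
  have hbc := hE.2.2.1 b c h2
  rcases (hE.2.1 a c).2 h3 with h | h
  · exact h
  · exact absurd (Relation.TransGen.head hab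
      (Relation.TransGen.head hbc (Relation.TransGen.single h))) (hE.1 a)

lemma meek_R1 (hG : G.IsMPDAG) {a b c : V} (h1 : G.dir a b) (h2 : G.undir b c)
    (h3 : ¬ G.adj a c) : G.dir b c := by
  have hac : a ≠ c := by
    rintro rfl
    exact G.disj a b (G.undir_symm b a h2) h1
  apply rep_all_dir hG (Or.inr (Or.inr h2))
  intro E hE
  rcases (hE.2.1 b c).2 (Or.inr (Or.inr h2)) with h | h
  · exact h
  · exfalso
    have hv : vStructD E a b c :=
      ⟨hE.2.2.1 a b h1, h, hac, fun hx => h3 ((hE.2.1 a c).1 hx)⟩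
    exact G.disj c b (G.undir_symm b c h2) ((hE.2.2.2 a b c).1 hv).2.1

lemma claimC (hG : G.IsMPDAG) {a b c : V} (h1 : G.dir a b) (h2 : G.undir b c) :
    G.dir a c ∨ G.undir a c := by
  by_cases h3 : G.adj a c
  · rcases h3 with h | h | h
    · exact Or.inl h
    · exact absurd
        (meek_R2 hG h h1 (Or.inr (Or.inr (G.undir_symm b c h2))))
        (G.disj c b (G.undir_symm b c h2))
    · exact Or.inr h
  · exact absurd (meek_R1 hG h1 h2 h3) (G.disj b c h2)

/-- An outside parent of a vertex is a parent of everything undirected-connected to it. -/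
lemma claimG (hG : G.IsMPDAG) {a b c : V} (h1 : G.dir a b)
    (hna : ¬ Relation.ReflTransGen G.undir b a)
    (h2 : Relation.ReflTransGen G.undir b c) : G.dir a c := by
  induction h2 with
  | refl => exact h1
  | tail hbc' hc'c ih =>
    rcases claimC hG ih hc'c with h | h
    · exact h
    · exact absurd ((Relation.ReflTransGen.tail hbc' hc'c).tail
        (G.undir_symm _ _ h)) hna

end MeekAux
/-- given an MPDAG `G*` with B-components over vertex sets `W i`, any
choice of DAGs `Es i ∈ [G*ᵢ]` for each B-component combines into a DAG `E ∈ [G*]`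
whose induced subgraph over each `W i` equals `Es i`. -/
theorem stmt13 {V : Type*} {ι : Type*} (G : PDAG V) (hG : G.IsMPDAG)
    (W : ι → Set V) (hcomp : ∀ i, IsBComponent G (W i))
    (hpart : ∀ v, ∃! i, v ∈ W i)
    (Es : ι → (V → V → Prop))
    (hmem : ∀ i a b, Es i a b → a ∈ W i ∧ b ∈ W i)
    (hrep : ∀ i, (G.induce (W i)).Represents (Es i)) :
    ∃ E, G.Represents E ∧ ∀ i a b, a ∈ W i → b ∈ W i → (E a b ↔ Es i a b) := by
  classical
  -- the component function
  have hfex : ∀ v, ∃ i, v ∈ W i ∧ ∀ j, v ∈ W j → j = i := fun v => hpart v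
  choose f hf hfu using hfex
  -- closure of components under undirected connectivity
  have hclose : ∀ i b c, b ∈ W i → Relation.ReflTransGen G.undir b c → c ∈ W i := by
    intro i b c hb hbc
    obtain ⟨r, hr⟩ := hcomp i
    rw [hr] at hb ⊢
    exact hb.trans hbc
  have hsymmRT : ∀ b c, Relation.ReflTransGen G.undir b c →
      Relation.ReflTransGen G.undir c b := by
    intro b c h
    haveI : Std.Symm G.undir := ⟨fun x y hxy => G.undir_symm x y hxy⟩
    exact (Relation.ReflTransGen.symmetric (r := G.undir)).symm b c h
  have hconn : ∀ i b c, b ∈ W i → c ∈ W i → Relation.ReflTransGen G.undir b c := by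
    intro i b c hb hc
    obtain ⟨r, hr⟩ := hcomp i
    rw [hr] at hb hc
    exact (hsymmRT r b hb).trans hc
  -- vertices in different components are not undirected-connected
  have hnconn : ∀ i j a b, a ∈ W i → b ∈ W j → i ≠ j →
      ¬ Relation.ReflTransGen G.undir b a := by
    intro i j a b ha hb hij hba
    exact hij ((hfu a i ha).trans (hfu a j (hclose j b a hb hba)).symm)
  -- the combined orientation
  set E : V → V → Prop := fun a b => G.dir a b ∨ ∃ i, Es i a b with hEdef
  -- inside a component, E agrees with Es
  have hwithin : ∀ i a b, a ∈ W i → b ∈ W i → (E a b ↔ Es i a b) := by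
    intro i a b ha hb
    constructor
    · rintro (h | ⟨j, h⟩)
      · exact (hrep i).2.2.1 a b ⟨ha, hb, h⟩
      · rwa [(hfu a i ha).trans (hfu a j (hmem j a b h).1).symm]
    · intro h
      exact Or.inr ⟨i, h⟩
  -- across components, E edges must be directed in G
  have hcross : ∀ a b, E a b → f a ≠ f b → G.dir a b := by
    rintro a b (h | ⟨j, h⟩) hne
    · exact h
    · exact absurd (((hfu a j (hmem j a b h).1).symm).trans
        (hfu b j (hmem j a b h).2)) hne
  -- an outside parent of one vertex of a component is a parent of all of it
  have hcrossAll : ∀ a b c, G.dir a b → f a ≠ f b → c ∈ W (f b) → G.dir a c := by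
    intro a b c hd hne hc
    exact claimG hG hd (hnconn (f a) (f b) a b (hf a) (hf b) hne)
      (hconn (f b) b c (hf b) hc)
  -- the order on components
  set P : ι → ι → Prop := fun i j => i ≠ j ∧ ∃ a b, a ∈ W i ∧ b ∈ W j ∧ G.dir a b
    with hPdef
  have hK : ∀ i j, Relation.TransGen P i j →
      ∀ b ∈ W j, ∃ a ∈ W i, Relation.TransGen G.dir a b := by
    intro i j h
    induction h with
    | single h =>
      obtain ⟨hne, a, b₀, ha, hb₀, hd⟩ := h
      intro b hb
      refine ⟨a, ha, Relation.TransGen.single ?_⟩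
      have hfa : f a = i := (hfu a i ha).symm ▸ rfl
      exact claimG hG hd (fun hcon => hne
        ((hfu a i ha).trans (hfu a _ (hclose _ b₀ a hb₀ hcon)).symm ▸ rfl))
        (hconn _ b₀ b hb₀ hb)
    | tail h h' ih =>
      obtain ⟨hne, a', b₀, ha', hb₀, hd⟩ := h'
      intro b hb
      have hd' : G.dir a' b :=
        claimG hG hd (fun hcon => hne
          ((hfu a' _ ha').trans (hfu a' _ (hclose _ b₀ a' hb₀ hcon)).symm ▸ rfl))
          (hconn _ b₀ b hb₀ hb)
      obtain ⟨a, ha, hta⟩ := ih a' ha'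
      exact ⟨a, ha, hta.tail hd'⟩
  have hNoPCyc : ∀ i, ¬ Relation.TransGen P i i := by
    intro i h
    cases h with
    | single h => exact h.1 rfl
    | @tail j _ hij hji =>
      obtain ⟨hne, a, b₀, ha, hb₀, hd⟩ := hji
      obtain ⟨a'', ha'', hta⟩ := hK i j hij a ha
      have hd2 : G.dir a a'' :=
        claimG hG hd (hnconn j i a b₀ ha hb₀ hne) (hconn i b₀ a'' hb₀ ha'')
      have hcyc : Relation.TransGen G.dir a a := Relation.TransGen.head hd2 hta
      obtain ⟨E₀, hE₀⟩ := hG.1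
      exact hE₀.1 a (Relation.TransGen.mono (fun x y hxy => hE₀.2.2.1 x y hxy) _ _ hcyc)
  -- each E edge moves weakly forward among components
  have hstep : ∀ a b, E a b → Relation.ReflTransGen P (f a) (f b) := by
    intro a b h
    by_cases hne : f a = f b
    · rw [hne]
    · exact Relation.ReflTransGen.single ⟨hne, a, b, hf a, hf b, hcross a b h hne⟩
  have hL : ∀ x y, Relation.TransGen E x y → Relation.ReflTransGen P (f x) (f y) := by
    intro x y h
    induction h with
    | single h => exact hstep _ _ h
    | tail h h' ih => exact ih.trans (hstep _ _ h')
  have hM : ∀ x y, Relation.TransGen E x y → f x = f y →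
      Relation.TransGen (Es (f x)) x y ∨ Relation.TransGen P (f x) (f x) := by
    intro x y h
    induction h with
    | single h =>
      intro heq
      exact Or.inl (Relation.TransGen.single
        ((hwithin (f x) x _ (hf x) (heq ▸ hf _)).1 h))
    | @tail z y h h' ih =>
      intro heq
      by_cases hzy : f z = f y
      · have hxz : f x = f z := heq.trans hzy.symm
        rcases ih hxz with hc | hc
        · refine Or.inl (hc.tail ?_)
          have : z ∈ W (f x) := hxz ▸ hf z
          have hy : y ∈ W (f x) := heq ▸ hf y
          exact (hwithin (f x) z y this hy).1 h'
        · exact Or.inr hc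
      · right
        have h1 : Relation.ReflTransGen P (f x) (f z) := hL x z h
        have h2 : P (f z) (f y) := ⟨hzy, z, y, hf z, hf y, hcross z y h' hzy⟩
        have h3 := Relation.TransGen.tail' h1 h2
        rw [heq] at h3 ⊢
        exact h3
  have hAcyc : Acyclic E := by
    intro x hx
    rcases hM x x hx rfl with h | h
    · exact (hrep (f x)).1 x h
    · exact hNoPCyc (f x) h
  -- skeleton
  have hSkel : ∀ a b, adjD E a b ↔ G.adj a b := by
    intro a b
    constructor
    · have key : ∀ u v, E u v → G.adj u v := by
        rintro u v (h | ⟨j, h⟩)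
        · exact Or.inl h
        · obtain ⟨hu, hv⟩ := hmem j u v h
          rcases ((hrep j).2.1 u v).1 (Or.inl h) with h' | h' | h'
          · exact Or.inl h'.2.2
          · exact Or.inr (Or.inl h'.2.2)
          · exact Or.inr (Or.inr h'.2.2)
      rintro (h | h)
      · exact key a b h
      · rcases key b a h with h' | h' | h'
        · exact Or.inr (Or.inl h')
        · exact Or.inl h'
        · exact Or.inr (Or.inr (G.undir_symm b a h'))
    · rintro (h | h | h)
      · exact Or.inl (Or.inl h)
      · exact Or.inr (Or.inl h)
      · -- undirected: same component
        have hb : b ∈ W (f a) := hclose (f a) a b (hf a)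
          (Relation.ReflTransGen.single h)
        have : adjD (Es (f a)) a b :=
          ((hrep (f a)).2.1 a b).2 (Or.inr (Or.inr ⟨hf a, hb, h⟩))
        rcases this with h' | h'
        · exact Or.inl (Or.inr ⟨f a, h'⟩)
        · exact Or.inr (Or.inr ⟨f a, h'⟩)
  -- directed edges preserved
  have hDir : ∀ a b, G.dir a b → E a b := fun a b h => Or.inl h
  -- v-structures: one half
  have hhalf : ∀ a b c, vStructD E a b c → G.dir a b := by
    intro a b c hv
    obtain ⟨hab, hcb, hac, hnadj⟩ := hv
    have hnGadj : ¬ G.adj a c := fun h => hnadj ((hSkel a c).2 h)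
    -- reduce E c b to a canonical form
    have hcb' : Es (f b) c b ∨ (G.dir c b ∧ f c ≠ f b) := by
      rcases hcb with h | ⟨j, h⟩
      · by_cases hfc : f c = f b
        · exact Or.inl ((hwithin (f b) c b (hfc ▸ hf c) (hf b)).1 (Or.inl h))
        · exact Or.inr ⟨h, hfc⟩
      · have : j = f b := hfu b j (hmem j c b h).2
        exact Or.inl (this ▸ h)
    rcases hab with h | ⟨j, h⟩
    · exact h
    · -- a, b in component j
      obtain ⟨ha, hb⟩ := hmem j a b h
      have hj : j = f b := hfu b j hb
      subst hj
      rcases ((hrep (f b)).2.1 a b).1 (Or.inl h) with h' | h' | h'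
      · exact h'.2.2
      · -- Es would be cyclic
        exact absurd (Relation.TransGen.head h
          (Relation.TransGen.single ((hrep (f b)).2.2.1 b a h')))
          (fun hcy => (hrep (f b)).1 a hcy)
      · -- a — b undirected inside the component
        rcases hcb' with hc | ⟨hcd, hfc⟩
        · -- c is also in the component: v-structure in Es (f b)
          have hnadj' : ¬ adjD (Es (f b)) a c := by
            intro hx
            apply hnGadj
            rcases ((hrep (f b)).2.1 a c).1 hx with h'' | h'' | h''
            · exact Or.inl h''.2.2
            · exact Or.inr (Or.inl h''.2.2)
            · exact Or.inr (Or.inr h''.2.2)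
          have hvv : vStructD (Es (f b)) a b c := ⟨h, hc, hac, hnadj'⟩
          exact (((hrep (f b)).2.2.2 a b c).1 hvv).1.2.2
        · -- c is outside: c is a parent of the whole component, incl. a
          exact absurd (Or.inr (Or.inl (hcrossAll c b a hcd hfc ha))) hnGadj
  have hV : ∀ a b c, vStructD E a b c ↔ G.vStruct a b c := by
    intro a b c
    constructor
    · intro hv
      refine ⟨hhalf a b c hv, hhalf c b a ?_, hv.2.2.1, fun h => hv.2.2.2 ((hSkel a c).2 h)⟩
      exact ⟨hv.2.1, hv.1, fun h => hv.2.2.1 h.symm, fun h => hv.2.2.2 (Or.symm h)⟩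
    · rintro ⟨h1, h2, h3, h4⟩
      exact ⟨Or.inl h1, Or.inl h2, h3, fun h => h4 ((hSkel a c).1 h)⟩
  exact ⟨E, ⟨hAcyc, hSkel, hDir, hV⟩, hwithin⟩
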